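/- Consider the network SIS model ẋ = (−D + B − XB)x with B entrywise nonnegative and irreducible and D positive diagonal. If x* ∈ [0,1]ⁿ is a nonzero equilibrium, then every entry of x* lies strictly between 0 and 1: 0 < x*_i < 1 for all i. -/
import Mathlib


open Matrix

/-- Irreducibility: for every nontrivial partition there is a nonzero cross entry. -/
def IsIrred {n : ℕ} (A : Matrix (Fin n) (Fin n) ℝ) : Prop :=
  ∀ S : Set (Fin n), S.Nonempty → Sᶜ.Nonempty → ∃ i ∈ S, ∃ j ∈ Sᶜ, A i j ≠ 0

/-- Any nonzero equilibrium of the network SIS model in the unit cube has all its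
entries strictly between 0 and 1. -/
theorem SIS_nonzero_equilibrium_interior {n : ℕ}
    (d : Fin n → ℝ) (hd : ∀ i, 0 < d i)
    (b : Matrix (Fin n) (Fin n) ℝ) (hb : ∀ i j, 0 ≤ b i j) (hirr : IsIrred b)
    (x : Fin n → ℝ) (hx_cube : ∀ i, x i ∈ Set.Icc (0 : ℝ) 1) (hx_ne : x ≠ 0)
    (heq : ∀ i, -(d i) * x i + (1 - x i) * ∑ j, b i j * x j = 0) :
    ∀ i, 0 < x i ∧ x i < 1 := by
  have hpos : ∀ i, 0 < x i := by
    by_contra h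
    push_neg at h
    obtain ⟨i0, hi0⟩ := h
    set S : Set (Fin n) := {i | 0 < x i} with hS
    have hSc : Sᶜ.Nonempty := ⟨i0, by simpa [hS] using hi0⟩
    have hSne : S.Nonempty := by
      have : ∃ i, x i ≠ 0 := by
        by_contra hc
        push_neg at hc
        exact hx_ne (funext hc)
      obtain ⟨i, hi⟩ := this
      exact ⟨i, lt_of_le_of_ne (hx_cube i).1 (Ne.symm hi)⟩
    have hScc : (Sᶜ)ᶜ.Nonempty := by simpa using hSne
    obtain ⟨i, hiSc, j, hjS, hbij⟩ := hirr Sᶜ hSc hScc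
    have hxi : x i = 0 := le_antisymm (by simpa [hS] using hiSc) (hx_cube i).1
    have hxj : 0 < x j := by simpa [hS] using hjS
    have hsum : ∑ k, b i k * x k = 0 := by
      have := heq i
      rw [hxi] at this
      linarith
    have hterm : b i j * x j = 0 := by
      have h0 : ∀ k ∈ Finset.univ, 0 ≤ b i k * x k := fun k _ =>
        mul_nonneg (hb i k) (hx_cube k).1
      exact (Finset.sum_eq_zero_iff_of_nonneg h0).1 hsum j (Finset.mem_univ j)
    have : 0 < b i j * x j :=
      mul_pos (lt_of_le_of_ne (hb i j) (Ne.symm hbij)) hxj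
    linarith
  intro i
  refine ⟨hpos i, lt_of_le_of_ne (hx_cube i).2 ?_⟩
  intro h1
  have := heq i
  rw [h1] at this
  have := hd i
  linarith
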